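/- Under the eigenvalue ordering E_0 = ⋯ = E_{s−1} < E_s ≤ ⋯ ≤ E_{D−1}, every critical point Û_k of f(U) = ⟨φ_0|U†HU|φ_0⟩ with k ≥ s is a strict saddle: there exists a skew-Hermitian Ω such that the Hessian bilinear form 2 Σ_l (E_l − E_k)|Ω_{lk}|² is strictly negative. Moreover, for k ≤ s−1 the Hessian bilinear form is nonnegative for every skew-Hermitian Ω, and is bounded below by 2Δ Σ_{l≥s}|Ω_{lk}|² with Δ = E_s − E_0. -/
import Mathlib


open Matrix BigOperators

noncomputable section

/-- under the ordering `E₀ = ⋯ = E_{s−1} < E_s ≤ ⋯ ≤ E_{D−1}`,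
for `k ≥ s` there is a skew-Hermitian `Ω` making the Hessian bilinear form
`2 Σ_l (E_l − E_k)|Ω_{lk}|²` strictly negative (strict saddle); for `k ≤ s−1`
the form is nonnegative for every skew-Hermitian `Ω` and bounded below by
`2Δ Σ_{l≥s}|Ω_{lk}|²`. -/
theorem saddle_classification (D : ℕ) (s : ℕ) (hs0 : 0 < s) (hs : s < D)
    (E : Fin D → ℝ) (ψ : Fin D → (Fin D → ℂ))
    (hortho : ∀ j l : Fin D, star (ψ j) ⬝ᵥ ψ l = if j = l then 1 else 0)
    (hmono : ∀ j k : Fin D, j ≤ k → E j ≤ E k)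
    (E0 : ℝ) (hdeg : ∀ k : Fin D, (k : ℕ) < s → E k = E0)
    (Δ : ℝ) (hΔ : Δ = E ⟨s, hs⟩ - E0) (hΔpos : 0 < Δ) :
    (∀ k : Fin D, s ≤ (k : ℕ) →
      ∃ Ω : Matrix (Fin D) (Fin D) ℂ, Ωᴴ = -Ω ∧
        2 * ∑ l, (E l - E k) * Complex.normSq (star (ψ l) ⬝ᵥ Ω.mulVec (ψ k)) < 0) ∧
    (∀ k : Fin D, (k : ℕ) < s →
      ∀ Ω : Matrix (Fin D) (Fin D) ℂ, Ωᴴ = -Ω →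
        0 ≤ 2 * ∑ l, (E l - E k) * Complex.normSq (star (ψ l) ⬝ᵥ Ω.mulVec (ψ k)) ∧
        2 * Δ * ∑ l ∈ Finset.univ.filter (fun l : Fin D => s ≤ (l : ℕ)),
            Complex.normSq (star (ψ l) ⬝ᵥ Ω.mulVec (ψ k))
          ≤ 2 * ∑ l, (E l - E k) * Complex.normSq (star (ψ l) ⬝ᵥ Ω.mulVec (ψ k))) := by
  have hD : 0 < D := lt_trans hs0 hs
  constructor
  · -- strict saddle part
    intro k hk
    set z : Fin D := ⟨0, hD⟩ with hz
    have hzk : z ≠ k := by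
      intro h
      have : (k : ℕ) = 0 := by rw [← h]
      omega
    refine ⟨vecMulVec (ψ z) (star (ψ k)) - vecMulVec (ψ k) (star (ψ z)), ?_, ?_⟩
    · ext i j
      simp [vecMulVec_apply, mul_comm]
    · have hmv : (vecMulVec (ψ z) (star (ψ k)) - vecMulVec (ψ k) (star (ψ z))).mulVec (ψ k)
          = ψ z := by
        ext j
        simp only [mulVec, dotProduct, Matrix.sub_apply, vecMulVec_apply, sub_mul,
          Finset.sum_sub_distrib]
        have h1 : ∑ i, ψ z j * star (ψ k) i * ψ k i = ψ z j * (star (ψ k) ⬝ᵥ ψ k) := by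
          simp [dotProduct, Finset.mul_sum, mul_assoc]
        have h2 : ∑ i, ψ k j * star (ψ z) i * ψ k i = ψ k j * (star (ψ z) ⬝ᵥ ψ k) := by
          simp [dotProduct, Finset.mul_sum, mul_assoc]
        rw [h1, h2, hortho, hortho, if_pos rfl, if_neg hzk]
        ring
      rw [hmv]
      have hsum : ∑ l, (E l - E k) * Complex.normSq (star (ψ l) ⬝ᵥ ψ z)
          = E z - E k := by
        rw [Finset.sum_eq_single z]
        · rw [hortho, if_pos rfl]; simp
        · intro l _ hl
          rw [hortho, if_neg hl]; simp
        · simp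
      rw [hsum]
      have hEz : E z = E0 := hdeg z hs0
      have hEk : E ⟨s, hs⟩ ≤ E k := hmono ⟨s, hs⟩ k (by simpa [Fin.le_def] using hk)
      nlinarith
  · intro k hk Ω hΩ
    have hEk : E k = E0 := hdeg k hk
    have hterm : ∀ l : Fin D,
        0 ≤ (E l - E k) * Complex.normSq (star (ψ l) ⬝ᵥ Ω.mulVec (ψ k)) := by
      intro l
      apply mul_nonneg _ (Complex.normSq_nonneg _)
      rcases lt_or_ge (l : ℕ) s with h | h
      · rw [hdeg l h, hEk]; simp
      · have : E ⟨s, hs⟩ ≤ E l := hmono ⟨s, hs⟩ l (by simpa [Fin.le_def] using h)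
        rw [hEk]; nlinarith
    constructor
    · have h := Finset.sum_nonneg (s := Finset.univ) (fun l _ => hterm l)
      positivity
    · rw [Finset.mul_sum, Finset.mul_sum]
      calc ∑ l ∈ Finset.univ.filter (fun l : Fin D => s ≤ (l : ℕ)),
            2 * Δ * Complex.normSq (star (ψ l) ⬝ᵥ Ω.mulVec (ψ k))
          ≤ ∑ l ∈ Finset.univ.filter (fun l : Fin D => s ≤ (l : ℕ)),
            2 * ((E l - E k) * Complex.normSq (star (ψ l) ⬝ᵥ Ω.mulVec (ψ k))) := by
            apply Finset.sum_le_sum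
            intro l hl
            have hls : s ≤ (l : ℕ) := (Finset.mem_filter.mp hl).2
            have h1 : E ⟨s, hs⟩ ≤ E l := hmono ⟨s, hs⟩ l (by simpa [Fin.le_def] using hls)
            have h2 : Δ ≤ E l - E k := by rw [hEk]; linarith [hΔ ▸ le_refl Δ, hΔ]
            nlinarith [Complex.normSq_nonneg (star (ψ l) ⬝ᵥ Ω.mulVec (ψ k))]
        _ ≤ ∑ l, 2 * ((E l - E k) * Complex.normSq (star (ψ l) ⬝ᵥ Ω.mulVec (ψ k))) := by
            apply Finset.sum_le_sum_of_subset_of_nonneg (Finset.filter_subset _ _)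
            intro l _ _
            linarith [hterm l]
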